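/- Let M be an n×n matrix over RatFunc ℂ all of whose entries have intDegree ≤ 0, and let B be a nonempty proper subset of Fin n with complement I. Then M_II - X • 1 is invertible (so the isospectral reduction R(M;B) exists), and every entry of R(M;B) has intDegree ≤ 0. -/

import Mathlib

set_option synthInstance.maxHeartbeats 1000000
set_option maxHeartbeats 1000000

open Matrix

/-- The isospectral reduction of `M` over `B`, with interior index set `I = Bᶜ`:
`R(M;B) = M_BB - M_BI (M_II - X•1)⁻¹ M_IB`. -/
noncomputable def isoRed {α : Type} [Fintype α] [DecidableEq α]
    (M : Matrix α α (RatFunc ℂ)) (B : Finset α) : Matrix ↥B ↥B (RatFunc ℂ) :=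
  M.submatrix (Subtype.val : ↥B → α) (Subtype.val : ↥B → α) -
    M.submatrix (Subtype.val : ↥B → α) (Subtype.val : ↥Bᶜ → α) *
      (M.submatrix (Subtype.val : ↥Bᶜ → α) (Subtype.val : ↥Bᶜ → α) -
        (RatFunc.X : RatFunc ℂ) • 1)⁻¹ *
      M.submatrix (Subtype.val : ↥Bᶜ → α) (Subtype.val : ↥B → α)

noncomputable def vv : Valuation (RatFunc ℂ) (WithZero (Multiplicative ℤ)) :=
  letI := Classical.decEq (RatFunc ℂ)
  FunctionField.inftyValuation ℂ

noncomputable def ee (d : ℤ) : WithZero (Multiplicative ℤ) := (Multiplicative.ofAdd d : Multiplicative ℤ)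

lemma ee_ne_zero (d : ℤ) : ee d ≠ 0 := WithZero.coe_ne_zero

lemma ee_zero : ee 0 = 1 := rfl

lemma ee_mul (a b : ℤ) : ee a * ee b = ee (a + b) := by
  rw [ee, ee, ee, ← WithZero.coe_mul, ← ofAdd_add]

lemma ee_inv (a : ℤ) : (ee a)⁻¹ = ee (-a) := by
  rw [ee, ee, ← WithZero.coe_inv, WithZero.coe_inj, ← ofAdd_neg]

lemma ee_le_ee {a b : ℤ} (h : a ≤ b) : ee a ≤ ee b := by
  rw [ee, ee, WithZero.coe_le_coe]; exact Multiplicative.ofAdd_le.mpr h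

lemma ee_lt_ee {a b : ℤ} (h : a < b) : ee a < ee b := by
  rw [ee, ee, WithZero.coe_lt_coe]; exact Multiplicative.ofAdd_lt.mpr h

lemma ee_pow (k : ℕ) : (ee 1) ^ k = ee k := by
  rw [ee, ee, ← WithZero.coe_pow, WithZero.coe_inj, ← ofAdd_nsmul]
  norm_num

lemma vv_le_one {x : RatFunc ℂ} (h : x.intDegree ≤ 0) : vv x ≤ 1 := by
  letI := Classical.decEq (RatFunc ℂ)
  by_cases hx : x = 0
  · simp [vv, hx, FunctionField.inftyValuation_apply, FunctionField.InftyValuation.map_zero']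
  · rw [vv, FunctionField.inftyValuation, RatFunc.inftyValuation_apply, RatFunc.inftyValuation_of_nonzero ℂ hx]
    exact ee_le_ee h

lemma intDegree_le_of_vv {x : RatFunc ℂ} (h : vv x ≤ 1) : x.intDegree ≤ 0 := by
  letI := Classical.decEq (RatFunc ℂ)
  by_cases hx : x = 0
  · simp [hx]
  · rw [vv, FunctionField.inftyValuation, RatFunc.inftyValuation_apply, RatFunc.inftyValuation_of_nonzero ℂ hx] at h
    have : ee x.intDegree ≤ ee 0 := h
    rw [ee, ee, WithZero.coe_le_coe] at this
    exact Multiplicative.ofAdd_le.mp this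

lemma vv_X : vv RatFunc.X = ee 1 := by
  letI := Classical.decEq (RatFunc ℂ)
  rw [vv, FunctionField.inftyValuation, RatFunc.inftyValuation_apply,
    RatFunc.inftyValuation_of_nonzero ℂ RatFunc.X_ne_zero, RatFunc.intDegree_X]
  rfl

section DetBound

variable {ι : Type*} [Fintype ι] [DecidableEq ι]

lemma vv_perm_prod (P : Matrix ι ι (RatFunc ℂ)) (σ : Equiv.Perm ι) :
    vv (Equiv.Perm.sign σ • ∏ k, P (σ k) k) = ∏ k, vv (P (σ k) k) := by
  rcases Int.units_eq_one_or (Equiv.Perm.sign σ) with h | h <;> rw [h]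
  · rw [one_smul, map_prod]
  · rw [Units.neg_smul, one_smul, Valuation.map_neg, map_prod]

lemma prod_vv_le (P : Matrix ι ι (RatFunc ℂ)) (σ : Equiv.Perm ι) (b : ι → WithZero (Multiplicative ℤ))
    (h : ∀ i j, vv (P i j) ≤ b i) : ∏ k, vv (P (σ k) k) ≤ ∏ i, b i := by
  calc ∏ k, vv (P (σ k) k) ≤ ∏ k, b (σ k) := Finset.prod_le_prod' (fun k _ => h _ _)
  _ = ∏ i, b i := Equiv.prod_comp σ b

lemma vv_det_le (P : Matrix ι ι (RatFunc ℂ)) (b : ι → WithZero (Multiplicative ℤ))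
    (h : ∀ i j, vv (P i j) ≤ b i) : vv P.det ≤ ∏ i, b i := by
  rw [Matrix.det_apply]
  exact Valuation.map_sum_le _ (fun σ _ => (vv_perm_prod P σ) ▸ prod_vv_le P σ b h)

lemma vv_det_eq (N : Matrix ι ι (RatFunc ℂ))
    (hdiag : ∀ i, vv (N i i) = ee 1) (hoff : ∀ i j, i ≠ j → vv (N i j) ≤ 1) :
    vv N.det = ee (Fintype.card ι) := by
  rw [Matrix.det_apply]
  set f : Equiv.Perm ι → RatFunc ℂ := fun σ => Equiv.Perm.sign σ • ∏ i, N (σ i) i with hf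
  have hid : vv (f 1) = ee (Fintype.card ι) := by
    rw [hf, vv_perm_prod]
    simp only [Equiv.Perm.one_apply]
    rw [Finset.prod_congr rfl (fun i _ => hdiag i), Finset.prod_const, ee_pow,
      Finset.card_univ]
  have hsplit : (∑ σ : Equiv.Perm ι, f σ)
      = f 1 + ∑ σ ∈ Finset.univ.erase 1, f σ :=
    (Finset.add_sum_erase _ f (Finset.mem_univ 1)).symm
  rw [hsplit, Valuation.map_add_eq_of_lt_left, hid]
  rw [hid]
  refine Valuation.map_sum_lt _ (ee_ne_zero _) ?_
  intro σ hσ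
  have hσ1 : σ ≠ 1 := (Finset.mem_erase.mp hσ).1
  rw [hf, vv_perm_prod]
  obtain ⟨k₀, hk₀⟩ : ∃ k, σ k ≠ k := by
    by_contra h; push_neg at h; exact hσ1 (Equiv.ext h)
  have hcard : 1 ≤ Fintype.card ι := Fintype.card_pos_iff.mpr ⟨k₀⟩
  have hfle : ∀ k, vv (N (σ k) k) ≤ ee 1 := by
    intro k
    by_cases hk : σ k = k
    · rw [hk, hdiag k]
    · exact le_trans (hoff _ _ hk) (ee_le_ee (by norm_num))
  calc ∏ k, vv (N (σ k) k)
      = vv (N (σ k₀) k₀) * ∏ k ∈ Finset.univ.erase k₀, vv (N (σ k) k) :=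
        (Finset.mul_prod_erase Finset.univ _ (Finset.mem_univ k₀)).symm
    _ ≤ 1 * ∏ k ∈ Finset.univ.erase k₀, ee 1 :=
        mul_le_mul' (hoff _ _ hk₀) (Finset.prod_le_prod' (fun k _ => hfle k))
    _ = ee ((Fintype.card ι : ℤ) - 1) := by
        rw [one_mul, Finset.prod_const, ee_pow,
          Finset.card_erase_of_mem (Finset.mem_univ k₀), Finset.card_univ]
        congr 1
        push_cast [Nat.cast_sub hcard]
        ring
    _ < ee (Fintype.card ι) := ee_lt_ee (by omega)

end DetBound

section Main

variable {ι : Type*} [Fintype ι] [DecidableEq ι]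

lemma vv_adjugate_le (N : Matrix ι ι (RatFunc ℂ)) (h : ∀ i j, vv (N i j) ≤ ee 1) (i j : ι) :
    vv (N.adjugate i j) ≤ ee ((Fintype.card ι : ℤ) - 1) := by
  have hcard : 1 ≤ Fintype.card ι := Fintype.card_pos_iff.mpr ⟨i⟩
  rw [Matrix.adjugate_apply]
  have hb : ∀ r c, vv ((N.updateRow j (Pi.single i 1)) r c)
      ≤ (if r = j then 1 else ee 1) := by
    intro r c
    rw [Matrix.updateRow_apply]
    by_cases hr : r = j
    · rw [if_pos hr, if_pos hr, Pi.single_apply]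
      split_ifs
      · rw [_root_.map_one]
      · rw [map_zero]; exact zero_le'
    · rw [if_neg hr, if_neg hr]; exact h r c
  refine le_trans (vv_det_le _ _ hb) (le_of_eq ?_)
  rw [← Finset.mul_prod_erase Finset.univ _ (Finset.mem_univ j), if_pos rfl, one_mul,
    Finset.prod_congr rfl (fun r hr => if_neg (Finset.mem_erase.mp hr).1),
    Finset.prod_const, ee_pow, Finset.card_erase_of_mem (Finset.mem_univ j),
    Finset.card_univ]
  congr 1
  push_cast [Nat.cast_sub hcard]
  ring

lemma vv_matrix_inv [Nonempty ι] (N : Matrix ι ι (RatFunc ℂ))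
    (hdiag : ∀ i, vv (N i i) = ee 1) (hoff : ∀ i j, i ≠ j → vv (N i j) ≤ 1) :
    IsUnit N ∧ ∀ i j, vv (N⁻¹ i j) ≤ 1 := by
  have hdet : vv N.det = ee (Fintype.card ι) := vv_det_eq N hdiag hoff
  have hdet0 : N.det ≠ 0 := by
    intro h
    exact ee_ne_zero _ (by rw [← hdet, h, map_zero])
  have hle : ∀ i j, vv (N i j) ≤ ee 1 := by
    intro i j
    by_cases hij : i = j
    · rw [hij, hdiag j]
    · exact le_trans (hoff i j hij) (ee_le_ee (by norm_num))
  refine ⟨(Matrix.isUnit_iff_isUnit_det N).mpr (isUnit_iff_ne_zero.mpr hdet0), ?_⟩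
  intro i j
  rw [Matrix.inv_def, Matrix.smul_apply, smul_eq_mul, _root_.map_mul, Ring.inverse_eq_inv',
    map_inv₀, hdet]
  calc (ee (Fintype.card ι))⁻¹ * vv (N.adjugate i j)
      ≤ (ee (Fintype.card ι))⁻¹ * ee ((Fintype.card ι : ℤ) - 1) :=
        mul_le_mul_right (vv_adjugate_le N hle i j) _
    _ = ee (-1) := by
        rw [ee_inv, ee_mul]
        congr 1
        ring
    _ ≤ 1 := ee_le_ee (by norm_num)

lemma vv_matmul_le {κ τ : Type*} [Fintype κ] (A : Matrix ι κ (RatFunc ℂ))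
    (Bm : Matrix κ τ (RatFunc ℂ)) (hA : ∀ i j, vv (A i j) ≤ 1)
    (hBm : ∀ i j, vv (Bm i j) ≤ 1) : ∀ i j, vv ((A * Bm) i j) ≤ 1 := by
  intro i j
  rw [Matrix.mul_apply]
  refine Valuation.map_sum_le _ (fun k _ => ?_)
  rw [_root_.map_mul]
  exact mul_le_one' (hA i k) (hBm k j)

end Main

theorem isoRed_exists_and_intDegree_le_zero {n : ℕ}
    (M : Matrix (Fin n) (Fin n) (RatFunc ℂ))
    (hdeg : ∀ i j, (M i j).intDegree ≤ 0)
    (B : Finset (Fin n)) (hB : B.Nonempty) (hBproper : B ≠ Finset.univ) :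
    IsUnit (M.submatrix (Subtype.val : ↥Bᶜ → Fin n) (Subtype.val : ↥Bᶜ → Fin n) -
      (RatFunc.X : RatFunc ℂ) • 1) ∧
    ∀ i j, ((isoRed M B) i j).intDegree ≤ 0 := by
  haveI : Nonempty ↥(Bᶜ) := by
    refine Finset.nonempty_coe_sort.mpr ?_
    obtain ⟨x, hx⟩ : ∃ x, x ∉ B := by
      by_contra h
      push_neg at h
      exact hBproper (Finset.eq_univ_iff_forall.mpr h)
    exact ⟨x, Finset.mem_compl.mpr hx⟩
  set N : Matrix ↥(Bᶜ) ↥(Bᶜ) (RatFunc ℂ) :=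
    M.submatrix (Subtype.val : ↥Bᶜ → Fin n) (Subtype.val : ↥Bᶜ → Fin n) -
      (RatFunc.X : RatFunc ℂ) • 1 with hN
  have hdiag : ∀ i, vv (N i i) = ee 1 := by
    intro i
    have : N i i = M i i - RatFunc.X := by
      simp [hN, Matrix.sub_apply, Matrix.smul_apply, Matrix.one_apply_eq]
    rw [this, Valuation.map_sub_eq_of_lt_right, vv_X]
    rw [vv_X]
    exact lt_of_le_of_lt (vv_le_one (hdeg _ _)) (ee_lt_ee (by norm_num : (0:ℤ) < 1))
  have hoff : ∀ i j, i ≠ j → vv (N i j) ≤ 1 := by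
    intro i j hij
    have : N i j = M i j := by
      simp [hN, Matrix.sub_apply, Matrix.smul_apply, Matrix.one_apply_ne hij]
    rw [this]
    exact vv_le_one (hdeg _ _)
  obtain ⟨hunit, hinv⟩ := vv_matrix_inv N hdiag hoff
  refine ⟨hunit, ?_⟩
  intro i j
  apply intDegree_le_of_vv
  rw [isoRed, Matrix.sub_apply]
  refine Valuation.map_sub_le _ (vv_le_one (hdeg _ _)) ?_
  exact vv_matmul_le _ _
    (vv_matmul_le _ _ (fun a b => vv_le_one (hdeg _ _)) hinv) (fun a b => vv_le_one (hdeg _ _)) i j
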